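/- For every word w over a finite alphabet Σ and every k in the interval [ι(w), min over a∈Σ of |w|_a], the union over ℓ' ∈ [0, k − ι(w)] of JScatFact_k(w, ℓ') equals Σ^k. That is, at most k − ι(w) jumbles suffice to obtain all words of length k. -/

import Mathlib

open List

variable {α : Type*}

/-- Parikh vector comparison: `u` has at most as many occurrences of each letter as `w`. -/
def ParikhLE [DecidableEq α] (u w : List α) : Prop :=
  ∀ a : α, u.count a ≤ w.count a

/-- `u` is a jumbled scattered factor of `w` with `ℓ` jumbles. -/
def JSF [DecidableEq α] (w : List α) (ℓ : ℕ) (u : List α) : Prop :=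
  ParikhLE u w ∧ ∃ v : List α, v.Sublist u ∧ v.Sublist w ∧ v.length + ℓ = u.length

/-- The jumble index `δ_w(u)`: minimal number of jumbles. -/
noncomputable def jumbleIndex [DecidableEq α] (w u : List α) : ℕ :=
  sInf {ℓ : ℕ | JSF w ℓ u}

/-- Length of a longest common scattered factor (subsequence) of `u` and `w`. -/
noncomputable def lcsf (u w : List α) : ℕ :=
  sSup {n : ℕ | ∃ v : List α, v.Sublist u ∧ v.Sublist w ∧ v.length = n}

/-- Length-`k` jumbled scattered factors of `w` with `ℓ` jumbles. -/
def JScatFactK [DecidableEq α] (k : ℕ) (w : List α) (ℓ : ℕ) : Set (List α) :=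
  {u | u.length = k ∧ JSF w ℓ u}

/-- Jumbled scattered factors of `w` of length at most `k` with `ℓ` jumbles. -/
def JScatFactLe [DecidableEq α] (k : ℕ) (w : List α) (ℓ : ℕ) : Set (List α) :=
  {u | u.length ≤ k ∧ JSF w ℓ u}

/-- Universality index `ι(w)`: largest `k` with `Σ^k ⊆ ScatFact(w)`. -/
noncomputable def univIndex (α : Type*) [Fintype α] (w : List α) : ℕ :=
  sSup {k : ℕ | ∀ u : List α, u.length = k → u.Sublist w}

/-- Minimal number of occurrences of a letter in `w`. -/
noncomputable def minCount (α : Type*) [Fintype α] [DecidableEq α] [Nonempty α]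
    (w : List α) : ℕ :=
  Finset.univ.inf' Finset.univ_nonempty (fun a : α => w.count a)

theorem stmt15 [Fintype α] [DecidableEq α] [Nonempty α] (w : List α) (k : ℕ)
    (h1 : univIndex α w ≤ k) (h2 : k ≤ minCount α w) :
    (⋃ ℓ' ∈ {ℓ' : ℕ | ℓ' ≤ k - univIndex α w}, JScatFactK k w ℓ') =
      {u : List α | u.length = k} := by
  have hmem : ∀ u : List α, u.length = univIndex α w → u.Sublist w := by
    have hne : ({k : ℕ | ∀ u : List α, u.length = k → u.Sublist w}).Nonempty := by
      refine ⟨0, fun u hu => ?_⟩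
      simpa [List.length_eq_zero_iff.mp hu] using (List.nil_sublist w)
    have hbdd : BddAbove {k : ℕ | ∀ u : List α, u.length = k → u.Sublist w} := by
      refine ⟨w.length, fun n hn => ?_⟩
      obtain ⟨a⟩ := ‹Nonempty α›
      have := hn (List.replicate n a) (by simp)
      simpa using this.length_le
    exact Nat.sSup_mem hne hbdd
  ext u
  simp only [Set.mem_iUnion, Set.mem_setOf_eq]
  constructor
  · rintro ⟨ℓ', -, hu, -⟩
    exact hu
  · intro hu
    refine ⟨k - univIndex α w, le_rfl, hu, ?_, ?_⟩
    · intro a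
      calc u.count a ≤ u.length := List.count_le_length
        _ = k := hu
        _ ≤ minCount α w := h2
        _ ≤ w.count a := Finset.inf'_le _ (Finset.mem_univ a)
    · refine ⟨u.take (univIndex α w), List.take_sublist _ _, ?_, ?_⟩
      · exact hmem _ (by simp [hu, h1])
      · simp [hu, h1, Nat.add_sub_cancel' h1]
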